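/- The metaplectic group Mp(2,ℤ), defined by the presentation ⟨ŝ, û | ŝ⁸ = 1, ŝ² = û³⟩, is the amalgamated free product ℤ/8 ∗_{ℤ/4} ℤ/12: the presented group on generators ŝ, û with relators {ŝ⁸, ŝ²û⁻³} is isomorphic to the pushout of the two injective group homomorphisms ℤ/4 → ℤ/8 sending 1 ↦ 2 and ℤ/4 → ℤ/12 sending 1 ↦ 3, via an isomorphism carrying ŝ to the image of the generator 1 of ℤ/8 and û to the image of the generator 1 of ℤ/12. -/

import Mathlib

/-- The relators `{ŝ⁸, ŝ²û⁻³}` (with `ŝ = FreeGroup.of 0`, `û = FreeGroup.of 1`). -/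
def mpRels : Set (FreeGroup (Fin 2)) :=
  {(FreeGroup.of 0) ^ 8, (FreeGroup.of 0) ^ 2 * ((FreeGroup.of 1)⁻¹) ^ 3}

/-- The metaplectic group `Mp(2,ℤ) = ⟨ŝ, û | ŝ⁸ = 1, ŝ² = û³⟩`. -/
abbrev Mp2Z := PresentedGroup mpRels

/-- The homomorphism `ℤ/4 → ℤ/8` sending `1 ↦ 2`. -/
def f48 : ZMod 4 →+ ZMod 8 :=
  ZMod.lift 4 ⟨(Int.castAddHom (ZMod 8)).comp (AddMonoidHom.mulRight 2), by decide⟩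

/-- The homomorphism `ℤ/4 → ℤ/12` sending `1 ↦ 3`. -/
def f412 : ZMod 4 →+ ZMod 12 :=
  ZMod.lift 4 ⟨(Int.castAddHom (ZMod 12)).comp (AddMonoidHom.mulRight 3), by decide⟩

/-- The two vertex groups of the amalgam, `ℤ/8` and `ℤ/12` (written multiplicatively). -/
def Gfam : Bool → Type
  | true => Multiplicative (ZMod 8)
  | false => Multiplicative (ZMod 12)

instance : (b : Bool) → Group (Gfam b)
  | true => inferInstanceAs (Group (Multiplicative (ZMod 8)))
  | false => inferInstanceAs (Group (Multiplicative (ZMod 12)))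

/-- The amalgamating homomorphisms `ℤ/4 → ℤ/8` (`1 ↦ 2`) and `ℤ/4 → ℤ/12` (`1 ↦ 3`). -/
def amalg : (b : Bool) → Multiplicative (ZMod 4) →* Gfam b
  | true =>
    show Multiplicative (ZMod 4) →* Multiplicative (ZMod 8) from AddMonoidHom.toMultiplicative f48
  | false =>
    show Multiplicative (ZMod 4) →* Multiplicative (ZMod 12) from
      AddMonoidHom.toMultiplicative f412

section Aux

instance : (b : Bool) → DecidableEq (Gfam b)
  | true => inferInstanceAs (DecidableEq (ZMod 8))
  | false => inferInstanceAs (DecidableEq (ZMod 12))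

instance : Fintype (Multiplicative (ZMod 4)) := inferInstanceAs (Fintype (ZMod 4))

/-- `ŝ` -/
def mpS : Mp2Z := PresentedGroup.of 0
/-- `û` -/
def mpU : Mp2Z := PresentedGroup.of 1

lemma mp_rel_mk (r : FreeGroup (Fin 2)) (hr : r ∈ mpRels) :
    PresentedGroup.mk mpRels r = 1 :=
  (QuotientGroup.eq_one_iff r).2 (Subgroup.subset_normalClosure hr)

lemma mpS_pow_eight : mpS ^ 8 = 1 := by
  have := mp_rel_mk _ (Set.mem_insert _ _)
  simpa [mpS, PresentedGroup.of] using this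

lemma mpS_sq_eq : mpS ^ 2 = mpU ^ 3 := by
  have := mp_rel_mk ((FreeGroup.of 0) ^ 2 * ((FreeGroup.of 1)⁻¹) ^ 3)
    (Set.mem_insert_iff.2 (Or.inr rfl))
  simp only [map_mul, map_pow, map_inv] at this
  have h : mpS ^ 2 * (mpU⁻¹) ^ 3 = 1 := by simpa [mpS, mpU, PresentedGroup.of] using this
  rw [inv_pow] at h
  exact (mul_inv_eq_one.mp h)

lemma mpU_pow_twelve : mpU ^ 12 = 1 := by
  rw [show (12 : ℕ) = 3 * 4 from rfl, pow_mul, ← mpS_sq_eq, ← pow_mul]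
  exact mpS_pow_eight

lemma mpS_zpow_eight : mpS ^ (8 : ℤ) = 1 := by
  rw [show ((8:ℤ)) = ((8:ℕ) : ℤ) from rfl, zpow_natCast]; exact mpS_pow_eight

lemma mpU_zpow_twelve : mpU ^ (12 : ℤ) = 1 := by
  rw [show ((12:ℤ)) = ((12:ℕ) : ℤ) from rfl, zpow_natCast]; exact mpU_pow_twelve

lemma mpS_zpow_two_eq : mpS ^ (2 : ℤ) = mpU ^ (3 : ℤ) := by
  rw [show ((2:ℤ)) = ((2:ℕ) : ℤ) from rfl, show ((3:ℤ)) = ((3:ℕ) : ℤ) from rfl,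
    zpow_natCast, zpow_natCast]
  exact mpS_sq_eq

/-- `ℤ/8 → Mp2Z`, `1 ↦ ŝ`. -/
def k8 : Multiplicative (ZMod 8) →* Mp2Z :=
  AddMonoidHom.toMultiplicativeLeft
    (ZMod.lift 8 ⟨zmultiplesHom (Additive Mp2Z) (Additive.ofMul mpS), by
      show ((8 : ℤ) • Additive.ofMul mpS) = 0
      rw [← ofMul_zpow, mpS_zpow_eight]; rfl⟩)

/-- `ℤ/12 → Mp2Z`, `1 ↦ û`. -/
def k12 : Multiplicative (ZMod 12) →* Mp2Z :=
  AddMonoidHom.toMultiplicativeLeft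
    (ZMod.lift 12 ⟨zmultiplesHom (Additive Mp2Z) (Additive.ofMul mpU), by
      show ((12 : ℤ) • Additive.ofMul mpU) = 0
      rw [← ofMul_zpow, mpU_zpow_twelve]; rfl⟩)

lemma k8_intCast (n : ℤ) : k8 (Multiplicative.ofAdd ((n : ZMod 8))) = mpS ^ n := by
  have : k8 (Multiplicative.ofAdd ((n : ZMod 8)))
      = Additive.toMul ((ZMod.lift 8 ⟨zmultiplesHom (Additive Mp2Z) (Additive.ofMul mpS), by
          show ((8 : ℤ) • Additive.ofMul mpS) = 0
          rw [← ofMul_zpow, mpS_zpow_eight]; rfl⟩) ((n : ZMod 8))) := rfl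
  rw [this, ZMod.lift_coe, zmultiplesHom_apply, toMul_zsmul]
  rfl

lemma k12_intCast (n : ℤ) : k12 (Multiplicative.ofAdd ((n : ZMod 12))) = mpU ^ n := by
  have : k12 (Multiplicative.ofAdd ((n : ZMod 12)))
      = Additive.toMul ((ZMod.lift 12 ⟨zmultiplesHom (Additive Mp2Z) (Additive.ofMul mpU), by
          show ((12 : ℤ) • Additive.ofMul mpU) = 0
          rw [← ofMul_zpow, mpU_zpow_twelve]; rfl⟩) ((n : ZMod 12))) := rfl
  rw [this, ZMod.lift_coe, zmultiplesHom_apply, toMul_zsmul]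
  rfl

def kfam : (b : Bool) → Gfam b →* Mp2Z
  | true => k8
  | false => k12

lemma f48_intCast (n : ℤ) : f48 ((n : ZMod 4)) = ((n * 2 : ℤ) : ZMod 8) := by
  rw [f48, ZMod.lift_coe]; rfl

lemma f412_intCast (n : ℤ) : f412 ((n : ZMod 4)) = ((n * 3 : ℤ) : ZMod 12) := by
  rw [f412, ZMod.lift_coe]; rfl

lemma mult_surj (m : ℕ) [NeZero m] (x : Multiplicative (ZMod m)) :
    ∃ n : ℤ, (Multiplicative.ofAdd ((n : ZMod m))) = x := by
  obtain ⟨n, hn⟩ := ZMod.intCast_surjective (Multiplicative.toAdd x)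
  exact ⟨n, by rw [hn]; rfl⟩

lemma kfam_comp (b : Bool) : (kfam b).comp (amalg b) = k8.comp (amalg true) := by
  cases b with
  | true => rfl
  | false =>
    ext x
    obtain ⟨n, rfl⟩ := mult_surj 4 x
    show k12 (Multiplicative.ofAdd (f412 ((n : ZMod 4))))
      = k8 (Multiplicative.ofAdd (f48 ((n : ZMod 4))))
    rw [f412_intCast, f48_intCast, k12_intCast, k8_intCast,
      show (n * 3 : ℤ) = 3 * n by ring, show (n * 2 : ℤ) = 2 * n by ring,
      zpow_mul, zpow_mul, mpS_zpow_two_eq]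

/-- The map `PushoutI amalg →* Mp2Z`. -/
def toMp : Monoid.PushoutI amalg →* Mp2Z :=
  Monoid.PushoutI.lift kfam (k8.comp (amalg true)) kfam_comp

def genImg : Fin 2 → Monoid.PushoutI amalg
  | 0 => Monoid.PushoutI.of (φ := amalg) true (Multiplicative.ofAdd (1 : ZMod 8))
  | 1 => Monoid.PushoutI.of (φ := amalg) false (Multiplicative.ofAdd (1 : ZMod 12))

lemma genImg_rels : ∀ r ∈ mpRels, FreeGroup.lift genImg r = 1 := by
  intro r hr
  rcases hr with rfl | rfl
  · rw [map_pow, FreeGroup.lift_apply_of]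
    show (Monoid.PushoutI.of (φ := amalg) true (Multiplicative.ofAdd (1 : ZMod 8))) ^ 8 = 1
    erw [← map_pow (Monoid.PushoutI.of (φ := amalg) true)]
    have h8 : (show Gfam true from Multiplicative.ofAdd (1 : ZMod 8)) ^ 8 = 1 := by decide
    erw [h8, map_one]
  · simp only [map_mul, map_pow, map_inv, FreeGroup.lift_apply_of]
    show (Monoid.PushoutI.of (φ := amalg) true (Multiplicative.ofAdd (1 : ZMod 8))) ^ 2 *
      ((Monoid.PushoutI.of (φ := amalg) false (Multiplicative.ofAdd (1 : ZMod 12)))⁻¹) ^ 3 = 1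
    erw [← map_pow (Monoid.PushoutI.of (φ := amalg) true), ← map_inv (Monoid.PushoutI.of (φ := amalg) false), ← map_pow (Monoid.PushoutI.of (φ := amalg) false)]
    have h2 : (show Gfam true from Multiplicative.ofAdd (1 : ZMod 8)) ^ 2
        = amalg true (Multiplicative.ofAdd (1 : ZMod 4)) := by decide
    have h3 : ((show Gfam false from Multiplicative.ofAdd (1 : ZMod 12))⁻¹) ^ 3
        = (amalg false (Multiplicative.ofAdd (1 : ZMod 4)))⁻¹ := by decide
    erw [h2, h3, map_inv]
    have h' : Monoid.PushoutI.of (φ := amalg) true (amalg true (Multiplicative.ofAdd (1 : ZMod 4)))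
        = Monoid.PushoutI.of (φ := amalg) false
            (amalg false (Multiplicative.ofAdd (1 : ZMod 4))) := by
      rw [Monoid.PushoutI.of_apply_eq_base, Monoid.PushoutI.of_apply_eq_base]
    rw [h', mul_inv_cancel]

/-- The map `Mp2Z →* PushoutI amalg`. -/
def toPush : Mp2Z →* Monoid.PushoutI amalg :=
  PresentedGroup.toGroup genImg_rels

lemma k8_one : k8 (Multiplicative.ofAdd (1 : ZMod 8)) = mpS := by
  rw [show (1 : ZMod 8) = ((1 : ℤ) : ZMod 8) by norm_num, k8_intCast, zpow_one]

lemma k12_one : k12 (Multiplicative.ofAdd (1 : ZMod 12)) = mpU := by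
  rw [show (1 : ZMod 12) = ((1 : ℤ) : ZMod 12) by norm_num, k12_intCast, zpow_one]

lemma toMp_toPush : toMp.comp toPush = MonoidHom.id _ := by
  apply PresentedGroup.ext
  intro x
  fin_cases x
  · show toMp (toPush (PresentedGroup.of 0)) = PresentedGroup.of 0
    rw [toPush, PresentedGroup.toGroup.of]
    show toMp (genImg 0) = mpS
    rw [genImg, toMp]
    erw [Monoid.PushoutI.lift_of]
    exact k8_one
  · show toMp (toPush (PresentedGroup.of 1)) = PresentedGroup.of 1
    rw [toPush, PresentedGroup.toGroup.of]
    show toMp (genImg 1) = mpU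
    rw [genImg, toMp]
    erw [Monoid.PushoutI.lift_of]
    exact k12_one

lemma toPush_mpS : toPush mpS
    = Monoid.PushoutI.of (φ := amalg) true (Multiplicative.ofAdd (1 : ZMod 8)) := by
  rw [toPush, mpS, PresentedGroup.toGroup.of]; rfl

lemma toPush_mpU : toPush mpU
    = Monoid.PushoutI.of (φ := amalg) false (Multiplicative.ofAdd (1 : ZMod 12)) := by
  rw [toPush, mpU, PresentedGroup.toGroup.of]; rfl

lemma ofAdd_one_zpow (m : ℕ) (n : ℤ) :
    (Multiplicative.ofAdd (1 : ZMod m)) ^ n = Multiplicative.ofAdd ((n : ZMod m)) := by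
  rw [← ofAdd_zsmul]
  congr 1
  simp

lemma toPush_toMp : toPush.comp toMp = MonoidHom.id _ := by
  apply Monoid.PushoutI.hom_ext_nonempty
  intro b
  cases b with
  | true =>
    ext x
    obtain ⟨n, rfl⟩ := mult_surj 8 x
    show toPush (toMp (Monoid.PushoutI.of (φ := amalg) true _)) = _
    rw [toMp]
    erw [Monoid.PushoutI.lift_of]
    show toPush (k8 _) = _
    rw [k8_intCast, map_zpow, toPush_mpS]
    erw [← map_zpow (Monoid.PushoutI.of (φ := amalg) true)]
    exact congrArg _ (ofAdd_one_zpow 8 n)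
  | false =>
    ext x
    obtain ⟨n, rfl⟩ := mult_surj 12 x
    show toPush (toMp (Monoid.PushoutI.of (φ := amalg) false _)) = _
    rw [toMp]
    erw [Monoid.PushoutI.lift_of]
    show toPush (k12 _) = _
    rw [k12_intCast, map_zpow, toPush_mpU]
    erw [← map_zpow (Monoid.PushoutI.of (φ := amalg) false)]
    exact congrArg _ (ofAdd_one_zpow 12 n)

end Aux


/-- `Mp(2,ℤ) = ⟨ŝ, û | ŝ⁸ = 1, ŝ² = û³⟩ ≅ ℤ/8 ∗_{ℤ/4} ℤ/12`: the amalgamating maps are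
injective and send `1 ↦ 2` and `1 ↦ 3` respectively, and the presented group is
isomorphic to the pushout via an isomorphism carrying `ŝ` to the image of the generator
of `ℤ/8` and `û` to the image of the generator of `ℤ/12`. -/
theorem Mp2Z_amalgam :
    Function.Injective (amalg true) ∧
    Function.Injective (amalg false) ∧
    amalg true (Multiplicative.ofAdd (1 : ZMod 4)) = Multiplicative.ofAdd (2 : ZMod 8) ∧
    amalg false (Multiplicative.ofAdd (1 : ZMod 4)) = Multiplicative.ofAdd (3 : ZMod 12) ∧
    ∃ e : Mp2Z ≃* Monoid.PushoutI amalg,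
      e (PresentedGroup.of 0) =
        Monoid.PushoutI.of (φ := amalg) true (Multiplicative.ofAdd (1 : ZMod 8)) ∧
      e (PresentedGroup.of 1) =
        Monoid.PushoutI.of (φ := amalg) false (Multiplicative.ofAdd (1 : ZMod 12)) := by
  refine ⟨by decide, by decide, by rfl, by rfl, ?_⟩
  refine ⟨MonoidHom.toMulEquiv toPush toMp toMp_toPush toPush_toMp, ?_, ?_⟩
  · show toPush (PresentedGroup.of 0) = _
    rw [toPush, PresentedGroup.toGroup.of]; rfl
  · show toPush (PresentedGroup.of 1) = _
    rw [toPush, PresentedGroup.toGroup.of]; rfl
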